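/- arXiv:1203.3168 — 2 statements merged into one kernel-verified Lean document; each statement's English description precedes it below -/
import Mathlib

section
/- For a generic (2n+1)×(2n+1) skew-symmetric matrix φ over a commutative ring, the vector Y = (Y_1, ..., Y_{2n+1}) with Y_i = (-1)^{i+1} Pf(φ(i)), where φ(i) is obtained by deleting the i-th row and column, satisfies φ · Y = 0. -/
open Finset in
/-- The set of permutations of `Fin (2*n)` giving normalized perfect matchings. -/
noncomputable def pfPerms (n : ℕ) : Finset (Equiv.Perm (Fin (2*n))) :=
  Finset.univ.filter (fun σ =>
    (∀ i : Fin n, σ ⟨2*i, by omega⟩ < σ ⟨2*i+1, by omega⟩) ∧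
    (∀ i j : Fin n, i < j → σ ⟨2*(i:ℕ), by omega⟩ < σ ⟨2*(j:ℕ), by omega⟩))

/-- The Pfaffian of a `2n × 2n` matrix, as the signed sum over perfect matchings. -/
noncomputable def pfaffian {R : Type*} [CommRing R] {n : ℕ}
    (A : Matrix (Fin (2*n)) (Fin (2*n)) R) : R :=
  ∑ σ ∈ pfPerms n, (Equiv.Perm.sign σ : ℤ) •
    ∏ i : Fin n, A (σ ⟨2*i, by omega⟩) (σ ⟨2*i+1, by omega⟩)

namespace PfAux
open Equiv Finset

variable {n : ℕ}

def pp (t : Fin n) (b : Bool) : Fin (2*n) :=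
  ⟨2*t.val + (if b then 1 else 0), by have := t.2; split <;> omega⟩

def prt (x : Fin (2*n)) : Fin n := ⟨x.val / 2, by have := x.2; omega⟩

def bit (x : Fin (2*n)) : Bool := decide (x.val % 2 = 1)

@[simp] lemma prt_pp (t : Fin n) (b : Bool) : prt (pp t b) = t := by
  cases b <;> (apply Fin.ext; simp [pp, prt]) <;> omega

@[simp] lemma bit_pp (t : Fin n) (b : Bool) : bit (pp t b) = b := by
  cases b <;> simp [pp, bit] <;> omega

@[simp] lemma pp_prt_bit (x : Fin (2*n)) : pp (prt x) (bit x) = x := by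
  apply Fin.ext
  have := x.2
  by_cases h : x.val % 2 = 1 <;> simp [pp, prt, bit, h] <;> omega

@[simp] lemma pp_eq_iff {t s : Fin n} {b c : Bool} : pp t b = pp s c ↔ t = s ∧ b = c := by
  constructor
  · intro h
    constructor
    · rw [← prt_pp t b, h, prt_pp]
    · rw [← bit_pp t b, h, bit_pp]
  · rintro ⟨rfl, rfl⟩; rfl

lemma pp_false (t : Fin n) : pp t false = ⟨2*(t:ℕ), by have := t.2; omega⟩ := by
  apply Fin.ext; simp [pp]

lemma pp_true (t : Fin n) : pp t true = ⟨2*(t:ℕ)+1, by have := t.2; omega⟩ := by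
  apply Fin.ext; simp [pp]

lemma perm_ext_pp {f g : Equiv.Perm (Fin (2*n))}
    (h : ∀ t b, f (pp t b) = g (pp t b)) : f = g :=
  Equiv.ext fun x => by rw [← pp_prt_bit x]; exact h _ _

/-- The term of the pfaffian sum, with the sign as a ring element. -/
noncomputable def wterm {R : Type*} [CommRing R] (A : Matrix (Fin (2*n)) (Fin (2*n)) R)
    (f : Equiv.Perm (Fin (2*n))) : R :=
  ((Equiv.Perm.sign f : ℤ) : R) * ∏ t : Fin n, A (f (pp t false)) (f (pp t true))

lemma pfaffian_eq {R : Type*} [CommRing R] (A : Matrix (Fin (2*n)) (Fin (2*n)) R) :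
    pfaffian A = ∑ σ ∈ pfPerms n, wterm A σ := by
  unfold pfaffian wterm
  refine Finset.sum_congr rfl fun σ _ => ?_
  simp only [zsmul_eq_mul, pp_false, pp_true]


lemma mem_pfPerms_iff {σ : Equiv.Perm (Fin (2*n))} :
    σ ∈ pfPerms n ↔ (∀ t, σ (pp t false) < σ (pp t true)) ∧
      StrictMono (fun s => σ (pp s false)) := by
  simp only [pfPerms, Finset.mem_filter, Finset.mem_univ, true_and]
  constructor
  · rintro ⟨h1, h2⟩
    refine ⟨fun t => ?_, fun s u hsu => ?_⟩
    · rw [pp_false, pp_true]; exact h1 t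
    · simp only []
      rw [pp_false, pp_false]; exact h2 s u hsu
  · rintro ⟨h1, h2⟩
    refine ⟨fun t => ?_, fun s u hsu => ?_⟩
    · rw [← pp_false, ← pp_true]; exact h1 t
    · rw [← pp_false, ← pp_false]; exact h2 hsu


/-! ### The hyperoctahedral re-parametrization `hh` -/

def hh (ε : Fin n → Bool) (τ : Equiv.Perm (Fin n)) : Equiv.Perm (Fin (2*n)) where
  toFun x := pp (τ (prt x)) (xor (bit x) (ε (prt x)))
  invFun y := pp (τ.symm (prt y)) (xor (bit y) (ε (τ.symm (prt y))))
  left_inv x := by simp [Bool.xor_assoc]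
  right_inv y := by simp [Bool.xor_assoc]

@[simp] lemma hh_pp (ε : Fin n → Bool) (τ : Equiv.Perm (Fin n)) (t : Fin n) (b : Bool) :
    hh ε τ (pp t b) = pp (τ t) (xor b (ε t)) := by
  simp [hh]

lemma hh_decomp (ε : Fin n → Bool) (τ : Equiv.Perm (Fin n)) :
    hh ε τ = hh (fun _ => false) τ * hh ε 1 := by
  apply perm_ext_pp
  intro t b
  simp

lemma hh0_mul (τ₁ τ₂ : Equiv.Perm (Fin n)) :
    hh (fun _ => false) (τ₁ * τ₂) = hh (fun _ => false) τ₁ * hh (fun _ => false) τ₂ := by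
  apply perm_ext_pp
  intro t b
  simp

lemma hh0_one : hh (fun _ => false) (1 : Equiv.Perm (Fin n)) = 1 := by
  apply perm_ext_pp
  intro t b
  simp

lemma hh0_swap {a b : Fin n} (hab : a ≠ b) :
    hh (fun _ => false) (Equiv.swap a b) =
      Equiv.swap (pp a false) (pp b false) * Equiv.swap (pp a true) (pp b true) := by
  apply perm_ext_pp
  intro t c
  rcases eq_or_ne t a with rfl | ha
  · rcases c with _ | _ <;>
      simp [Equiv.swap_apply_def, pp_eq_iff, hab]
  · rcases eq_or_ne t b with rfl | hb
    · rcases c with _ | _ <;>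
        simp [Equiv.swap_apply_def, pp_eq_iff, hab.symm]
    · rcases c with _ | _ <;>
        simp [Equiv.swap_apply_def, pp_eq_iff, ha, hb]

lemma sign_hh0 (τ : Equiv.Perm (Fin n)) :
    Equiv.Perm.sign (hh (fun _ => false) τ) = 1 := by
  refine Equiv.Perm.swap_induction_on τ ?_ ?_
  · rw [hh0_one]; simp
  · intro π a b hab ih
    rw [hh0_mul, map_mul, ih, mul_one, hh0_swap hab, map_mul,
      Equiv.Perm.sign_swap (by simp [pp_eq_iff, hab]),
      Equiv.Perm.sign_swap (by simp [pp_eq_iff, hab])]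
    norm_num

lemma hh1_insert (F : Finset (Fin n)) (a : Fin n) (ha : a ∉ F) :
    hh (fun t => decide (t ∈ insert a F)) (1 : Equiv.Perm (Fin n)) =
      Equiv.swap (pp a false) (pp a true) * hh (fun t => decide (t ∈ F)) 1 := by
  apply perm_ext_pp
  intro t b
  rcases eq_or_ne t a with rfl | hta
  · cases b <;> simp [ha, Equiv.swap_apply_def, pp_eq_iff, Bool.xor_true]
  · simp [hta, Equiv.swap_apply_def, pp_eq_iff]

lemma sign_hh1_finset (F : Finset (Fin n)) :
    Equiv.Perm.sign (hh (fun t => decide (t ∈ F)) (1 : Equiv.Perm (Fin n))) = (-1) ^ F.card := by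
  classical
  induction F using Finset.induction_on with
  | empty =>
      have : (fun t : Fin n => decide (t ∈ (∅ : Finset (Fin n)))) = fun _ => false := by
        funext t; simp
      rw [this, hh0_one]; simp
  | insert a F ha ih =>
      rw [hh1_insert F a ha, map_mul, ih,
        Equiv.Perm.sign_swap (by simp [pp_eq_iff]), Finset.card_insert_of_notMem ha,
        pow_succ]
      rw [mul_comm]

lemma sign_hh (ε : Fin n → Bool) (τ : Equiv.Perm (Fin n)) :
    Equiv.Perm.sign (hh ε τ) = (-1) ^ (Finset.univ.filter (fun t => ε t = true)).card := by
  classical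
  have hε : ε = fun t => decide (t ∈ Finset.univ.filter (fun t => ε t = true)) := by
    funext t; by_cases h : ε t = true <;> simp [h]
  rw [hh_decomp, map_mul, sign_hh0, one_mul]
  conv_lhs => rw [hε]
  rw [sign_hh1_finset]


/-! ### Invariance of the pfaffian term under `hh` -/

section Wterm
variable {R : Type*} [CommRing R]

lemma alt_apply {N : ℕ} {A : Matrix (Fin N) (Fin N) R} (halt : A.transpose = -A)
    (x y : Fin N) : A x y = - A y x := by
  have h := congrFun (congrFun halt y) x
  simpa [Matrix.transpose_apply, Matrix.neg_apply] using h

lemma wterm_mul_hh {A : Matrix (Fin (2*n)) (Fin (2*n)) R} (halt : A.transpose = -A)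
    (f : Equiv.Perm (Fin (2*n))) (ε : Fin n → Bool) (τ : Equiv.Perm (Fin n)) :
    wterm A (f * hh ε τ) = wterm A f := by
  classical
  have hA : ∀ x y, A x y = - A y x := alt_apply halt
  set c := (Finset.univ.filter (fun t => ε t = true)).card with hc
  have hprod : (∏ t : Fin n, A ((f * hh ε τ) (pp t false)) ((f * hh ε τ) (pp t true)))
      = (-1 : R) ^ c * ∏ t : Fin n, A (f (pp t false)) (f (pp t true)) := by
    have h1 : ∀ t : Fin n, A ((f * hh ε τ) (pp t false)) ((f * hh ε τ) (pp t true))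
        = (if ε t = true then (-1 : R) else 1) * A (f (pp (τ t) false)) (f (pp (τ t) true)) := by
      intro t
      simp only [Equiv.Perm.mul_apply, hh_pp, Bool.false_xor, Bool.true_xor]
      cases h : ε t
      · simp
      · simp only [Bool.not_true, if_pos rfl]
        rw [hA (f (pp (τ t) true)) (f (pp (τ t) false))]
        norm_num
    rw [Finset.prod_congr rfl (fun t _ => h1 t), Finset.prod_mul_distrib]
    congr 1
    · rw [Finset.prod_ite, Finset.prod_const, Finset.prod_const, one_pow, mul_one]
    · exact Equiv.prod_comp τ (fun s => A (f (pp s false)) (f (pp s true)))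
  unfold wterm
  rw [hprod, map_mul, sign_hh, ← hc]
  push_cast
  ring_nf
  rw [Even.neg_one_pow (⟨c, by ring⟩ : Even (c*2)), mul_one]

end Wterm

/-! ### Normalization of a permutation to a `pfPerms` element -/

section Normal
variable (f : Equiv.Perm (Fin (2*n)))

noncomputable def pmin (t : Fin n) : Fin (2*n) := min (f (pp t false)) (f (pp t true))
noncomputable def pmax (t : Fin n) : Fin (2*n) := max (f (pp t false)) (f (pp t true))

lemma pair_ne (t : Fin n) : f (pp t false) ≠ f (pp t true) :=
  f.injective.ne (by simp)

lemma pmin_lt_pmax (t : Fin n) : pmin f t < pmax f t :=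
  min_lt_max.mpr (pair_ne f t)

lemma pmin_eq_or (t : Fin n) : pmin f t = f (pp t false) ∨ pmin f t = f (pp t true) :=
  min_choice _ _

lemma pmax_eq_or (t : Fin n) : pmax f t = f (pp t false) ∨ pmax f t = f (pp t true) :=
  max_choice _ _

lemma pmin_injective : Function.Injective (pmin f) := by
  intro t s h
  rcases pmin_eq_or f t with h1 | h1 <;> rcases pmin_eq_or f s with h2 | h2 <;>
  · rw [h1, h2] at h
    have := f.injective h
    simpa using (pp_eq_iff.mp this).1

lemma pmax_injective : Function.Injective (pmax f) := by
  intro t s h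
  rcases pmax_eq_or f t with h1 | h1 <;> rcases pmax_eq_or f s with h2 | h2 <;>
  · rw [h1, h2] at h
    have := f.injective h
    simpa using (pp_eq_iff.mp this).1

lemma pmin_ne_pmax (t s : Fin n) : pmin f t ≠ pmax f s := by
  intro h
  have hts : t = s := by
    rcases pmin_eq_or f t with h1 | h1 <;> rcases pmax_eq_or f s with h2 | h2 <;>
    · rw [h1, h2] at h
      have := f.injective h
      simpa using (pp_eq_iff.mp this).1
  subst hts
  exact absurd h (pmin_lt_pmax f t).ne

noncomputable def sortPerm : Equiv.Perm (Fin n) := Tuple.sort (pmin f)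

lemma sorted_pmin_strictMono : StrictMono (pmin f ∘ sortPerm f) :=
  (Tuple.monotone_sort _).strictMono_of_injective
    ((pmin_injective f).comp (sortPerm f).injective)

noncomputable def normal : Equiv.Perm (Fin (2*n)) :=
  Equiv.ofBijective
    (fun x => cond (bit x) (pmax f) (pmin f) ((sortPerm f) (prt x)))
    (by
      rw [← Finite.injective_iff_bijective]
      intro x y h
      simp only [] at h
      have hxy : prt x = prt y ∧ bit x = bit y := by
        cases hx : bit x <;> cases hy : bit y <;> rw [hx, hy] at h <;> simp only [cond] at h
        · exact ⟨(sortPerm f).injective (pmin_injective f h), rfl⟩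
        · exact absurd h (pmin_ne_pmax f _ _)
        · exact absurd h.symm (pmin_ne_pmax f _ _)
        · exact ⟨(sortPerm f).injective (pmax_injective f h), rfl⟩
      rw [← pp_prt_bit x, ← pp_prt_bit y, hxy.1, hxy.2])

lemma normal_pp (t : Fin n) (b : Bool) :
    normal f (pp t b) = cond b (pmax f) (pmin f) ((sortPerm f) t) := by
  simp [normal, Equiv.ofBijective]

lemma normal_mem : normal f ∈ pfPerms n := by
  rw [mem_pfPerms_iff]
  constructor
  · intro t
    rw [normal_pp, normal_pp]
    exact pmin_lt_pmax f _
  · intro s u hsu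
    simp only [normal_pp]
    exact sorted_pmin_strictMono f hsu

noncomputable def epsOf (t : Fin n) : Bool := decide (f (pp t true) < f (pp t false))

lemma normal_factor : normal f * hh (epsOf f) ((sortPerm f)⁻¹) = f := by
  apply perm_ext_pp
  intro t b
  simp only [Equiv.Perm.mul_apply, hh_pp, normal_pp]
  rw [show (sortPerm f) ((sortPerm f)⁻¹ t) = t from Equiv.apply_symm_apply _ _]
  unfold epsOf
  by_cases h : f (pp t true) < f (pp t false)
  · have hmin : pmin f t = f (pp t true) := min_eq_right h.le
    have hmax : pmax f t = f (pp t false) := max_eq_left h.le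
    cases b <;> simp [h, hmin, hmax]
  · have hle : f (pp t false) ≤ f (pp t true) := le_of_not_gt h
    have hmin : pmin f t = f (pp t false) := min_eq_left hle
    have hmax : pmax f t = f (pp t true) := max_eq_right hle
    cases b <;> simp [h, hmin, hmax]

end Normal

/-! ### Uniqueness of the normalization -/

section Unique
variable {σ : Equiv.Perm (Fin (2*n))} (hσ : σ ∈ pfPerms n)
  (ε : Fin n → Bool) (τ : Equiv.Perm (Fin n))

lemma spec_f_pp (t : Fin n) (b : Bool) :
    (σ * hh ε τ) (pp t b) = σ (pp (τ t) (xor b (ε t))) := by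
  simp

include hσ

lemma spec_pmin (t : Fin n) :
    pmin (σ * hh ε τ) t = σ (pp (τ t) false) := by
  obtain ⟨h1, -⟩ := mem_pfPerms_iff.mp hσ
  unfold pmin
  rw [spec_f_pp, spec_f_pp]
  cases h : ε t
  · simpa using (h1 (τ t)).le
  · simpa using (h1 (τ t)).le

lemma spec_pmax (t : Fin n) :
    pmax (σ * hh ε τ) t = σ (pp (τ t) true) := by
  obtain ⟨h1, -⟩ := mem_pfPerms_iff.mp hσ
  unfold pmax
  rw [spec_f_pp, spec_f_pp]
  cases h : ε t
  · simpa using (h1 (τ t)).le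
  · simpa using (h1 (τ t)).le

lemma spec_sortPerm : sortPerm (σ * hh ε τ) = τ⁻¹ := by
  obtain ⟨h1, h2⟩ := mem_pfPerms_iff.mp hσ
  set f := σ * hh ε τ with hf
  set s := sortPerm f with hs
  have hpmin : pmin f = (fun u => σ (pp u false)) ∘ τ := by
    funext t; exact spec_pmin hσ ε τ t
  have hms : StrictMono ((fun u => σ (pp u false)) ∘ (⇑τ ∘ ⇑s)) := by
    have h3 := sorted_pmin_strictMono f
    rw [hpmin] at h3
    exact h3
  have hrange := Function.Surjective.range_comp
    (τ.surjective.comp s.surjective) (fun u => σ (pp u false))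
  haveI : WellFoundedLT (Fin n) := inferInstance
  have heq : (fun u => σ (pp u false)) ∘ (⇑τ ∘ ⇑s) = fun u => σ (pp u false) :=
    (StrictMono.range_inj hms h2).mp hrange
  apply Equiv.ext
  intro x
  have hx : σ (pp (τ (s x)) false) = σ (pp x false) := congrFun heq x
  have : τ (s x) = x := by
    have := σ.injective hx
    simpa using (pp_eq_iff.mp this).1
  exact ((Equiv.symm_apply_eq τ).mpr this.symm).symm

lemma spec_normal : normal (σ * hh ε τ) = σ := by
  apply perm_ext_pp
  intro t b
  rw [normal_pp, spec_sortPerm hσ]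
  cases b
  · simpa [spec_pmin hσ ε τ] using congrArg σ (by simp : pp (τ (τ⁻¹ t)) false = pp t false)
  · simpa [spec_pmax hσ ε τ] using congrArg σ (by simp : pp (τ (τ⁻¹ t)) true = pp t true)

lemma spec_eps : epsOf (σ * hh ε τ) = ε := by
  obtain ⟨h1, -⟩ := mem_pfPerms_iff.mp hσ
  funext t
  unfold epsOf
  rw [spec_f_pp, spec_f_pp]
  cases h : ε t
  · simpa using asymm (h1 (τ t))
  · simpa using h1 (τ t)

end Unique

/-! ### The full (unnormalized) pfaffian sum -/

lemma sum_wterm_eq {R : Type*} [CommRing R] {A : Matrix (Fin (2*n)) (Fin (2*n)) R}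
    (halt : A.transpose = -A) :
    ∑ f : Equiv.Perm (Fin (2*n)), wterm A f =
      (Fintype.card ((Fin n → Bool) × Equiv.Perm (Fin n))) • pfaffian A := by
  classical
  rw [pfaffian_eq]
  have step1 : ∑ f : Equiv.Perm (Fin (2*n)), wterm A f =
      ∑ p ∈ (pfPerms n) ×ˢ (Finset.univ : Finset ((Fin n → Bool) × Equiv.Perm (Fin n))),
        wterm A (p.1 * hh p.2.1 p.2.2) := by
    refine Finset.sum_nbij'
      (fun f => (normal f, (epsOf f, (sortPerm f)⁻¹)))
      (fun p => p.1 * hh p.2.1 p.2.2) ?_ ?_ ?_ ?_ ?_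
    · intro f _
      exact Finset.mem_product.mpr ⟨normal_mem f, Finset.mem_univ _⟩
    · intro p _
      exact Finset.mem_univ _
    · intro f _
      exact normal_factor f
    · intro p hp
      have hσ : p.1 ∈ pfPerms n := (Finset.mem_product.mp hp).1
      refine Prod.ext ?_ (Prod.ext ?_ ?_)
      · exact spec_normal hσ _ _
      · exact spec_eps hσ _ _
      · simp [spec_sortPerm hσ]
    · intro f _
      rw [normal_factor f]
  rw [step1, Finset.sum_product]
  have step2 : ∀ σ ∈ pfPerms n,
      ∑ q : (Fin n → Bool) × Equiv.Perm (Fin n), wterm A (σ * hh q.1 q.2)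
        = (Fintype.card ((Fin n → Bool) × Equiv.Perm (Fin n))) • wterm A σ := by
    intro σ _
    rw [Finset.sum_congr rfl (fun q _ => wterm_mul_hh halt σ q.1 q.2)]
    simp [Finset.sum_const, Finset.card_univ]
  rw [Finset.sum_congr rfl step2, ← Finset.smul_sum]


/-! ### The index-replacement permutation `emv` -/

section Emv

/-- Auxiliary permutation of `Fin (2*n+1)` used to define `emv`. -/
def Qperm (i k : Fin (2*n+1)) : Equiv.Perm (Fin (2*n+1)) :=
  Fin.cycleRange k * Equiv.swap i k * (Fin.cycleRange i)⁻¹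

lemma Qperm_zero (i k : Fin (2*n+1)) : Qperm i k 0 = 0 := by
  simp only [Qperm, Equiv.Perm.mul_apply, Equiv.Perm.inv_def]
  rw [Fin.cycleRange_symm_zero, Equiv.swap_apply_left, Fin.cycleRange_self]

/-- The permutation of `Fin (2*n)` obtained by conjugating `swap i k` with the
`succAbove` identifications. -/
def emv (i k : Fin (2*n+1)) : Equiv.Perm (Fin (2*n)) :=
  (Equiv.Perm.decomposeFin (Qperm i k)).2

lemma decompose_Qperm (i k : Fin (2*n+1)) :
    Equiv.Perm.decomposeFin.symm ((0 : Fin (2*n+1)), emv i k) = Qperm i k := by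
  have h1 : Equiv.Perm.decomposeFin.symm (Equiv.Perm.decomposeFin (Qperm i k)) = Qperm i k :=
    Equiv.symm_apply_apply _ _
  have h0 : (Equiv.Perm.decomposeFin (Qperm i k)).1 = Qperm i k 0 := by
    conv_rhs => rw [← h1]
    rw [Equiv.Perm.decomposeFin_symm_apply_zero]
  rw [← h1]
  congr 1
  rw [Prod.ext_iff]
  exact ⟨by rw [h0, Qperm_zero], rfl⟩

lemma Qperm_succ (i k : Fin (2*n+1)) (m : Fin (2*n)) :
    Qperm i k m.succ = (emv i k m).succ := by
  conv_lhs => rw [← decompose_Qperm]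
  rw [Equiv.Perm.decomposeFin_symm_apply_succ, Equiv.swap_self]
  rfl

/-- The key property of `emv`. -/
lemma succAbove_emv (i k : Fin (2*n+1)) (m : Fin (2*n)) :
    k.succAbove (emv i k m) = Equiv.swap i k (i.succAbove m) := by
  have h1 : Qperm i k m.succ = Fin.cycleRange k (Equiv.swap i k (i.succAbove m)) := by
    simp only [Qperm, Equiv.Perm.mul_apply, Equiv.Perm.inv_def]
    rw [Fin.cycleRange_symm_succ]
  have h2 := Qperm_succ i k m
  rw [h2] at h1
  have := congrArg (Fin.cycleRange k).symm h1
  rw [Equiv.symm_apply_apply, Fin.cycleRange_symm_succ] at this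
  exact this

lemma sign_emv {i k : Fin (2*n+1)} (h : i ≠ k) :
    Equiv.Perm.sign (emv i k) = (-1) ^ ((i : ℕ) + (k : ℕ) + 1) := by
  have hQ : Equiv.Perm.sign (Qperm i k) = Equiv.Perm.sign (emv i k) := by
    conv_lhs => rw [← decompose_Qperm]
    rw [Equiv.Perm.decomposeFin.symm_sign, if_pos rfl, one_mul]
  have hQ' : Equiv.Perm.sign (Qperm i k) = (-1) ^ ((i : ℕ) + (k : ℕ) + 1) := by
    simp only [Qperm, map_mul, map_inv]
    rw [Fin.sign_cycleRange, Fin.sign_cycleRange, Equiv.Perm.sign_swap h]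
    rw [show ((-1:ℤˣ)^(i:ℕ))⁻¹ = (-1)^(i:ℕ) by rw [← inv_pow]; norm_num]
    apply Units.ext
    push_cast
    rw [pow_add, pow_add, pow_one]
    ring
  rw [← hQ, hQ']

lemma emv_inv {i k : Fin (2*n+1)} (h : i ≠ k) : emv k i = (emv i k)⁻¹ := by
  apply Equiv.ext
  intro m
  apply Fin.succAbove_right_injective (p := i)
  rw [succAbove_emv k i m]
  have h2 : k.succAbove (emv i k ((emv i k)⁻¹ m)) = Equiv.swap i k (i.succAbove ((emv i k)⁻¹ m)) :=
    succAbove_emv i k _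
  rw [show (emv i k) ((emv i k)⁻¹ m) = m from Equiv.apply_symm_apply _ _] at h2
  have h3 : i.succAbove ((emv i k)⁻¹ m) = Equiv.swap i k (k.succAbove m) := by
    rw [h2, Equiv.swap_apply_self]
  rw [h3, Equiv.swap_comm]

end Emv

/-! ### The involution proving the Pfaffian-vector identity -/

section Invol

def mOf (j i : Fin (2*n+1)) (h : ¬ i = j) : Fin (2*n) :=
  (finSuccAboveEquiv i).symm ⟨j, Ne.symm h⟩

lemma succAbove_mOf (j i : Fin (2*n+1)) (h : ¬ i = j) : i.succAbove (mOf j i h) = j := by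
  have h1 := (finSuccAboveEquiv i).apply_symm_apply ⟨j, Ne.symm h⟩
  rw [finSuccAboveEquiv_apply] at h1
  exact congrArg Subtype.val h1

def pOf (j i : Fin (2*n+1)) (h : ¬ i = j) (f : Equiv.Perm (Fin (2*n))) : Fin (2*n) :=
  f⁻¹ (mOf j i h)

def kOf (j i : Fin (2*n+1)) (h : ¬ i = j) (f : Equiv.Perm (Fin (2*n))) : Fin (2*n+1) :=
  i.succAbove (f (pp (prt (pOf j i h f)) (!bit (pOf j i h f))))

lemma flip_ne (p : Fin (2*n)) : pp (prt p) (!bit p) ≠ p := by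
  intro hEq
  have h2 : pp (prt p) (!bit p) = pp (prt p) (bit p) := by rw [hEq, pp_prt_bit]
  have h3 := (pp_eq_iff.mp h2).2
  simp at h3

variable (j i : Fin (2*n+1)) (h : ¬ i = j) (f : Equiv.Perm (Fin (2*n)))

lemma f_pOf : f (pOf j i h f) = mOf j i h := Equiv.apply_symm_apply f _

lemma kOf_ne_i : kOf j i h f ≠ i := Fin.succAbove_ne i _

lemma kOf_ne_j : kOf j i h f ≠ j := by
  intro heq
  unfold kOf at heq
  have h1 : i.succAbove (f (pp (prt (pOf j i h f)) (!bit (pOf j i h f)))) =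
      i.succAbove (mOf j i h) := by rw [succAbove_mOf j i h]; exact heq
  have h2 := Fin.succAbove_right_injective (p := i) h1
  have h3 := f.injective (h2.trans (f_pOf j i h f).symm)
  exact flip_ne _ h3

/-- The involution. -/
def iotag (j : Fin (2*n+1)) (a : Fin (2*n+1) × Equiv.Perm (Fin (2*n))) :
    Fin (2*n+1) × Equiv.Perm (Fin (2*n)) :=
  if h : a.1 = j then a else (kOf j a.1 h a.2, emv a.1 (kOf j a.1 h a.2) * a.2)

lemma iotag_snd_data :
    let k := kOf j i h f
    pOf j k (kOf_ne_j j i h f) (emv i k * f) = pOf j i h f ∧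
    kOf j k (kOf_ne_j j i h f) (emv i k * f) = i := by
  intro k
  have hkj := kOf_ne_j j i h f
  have hki := kOf_ne_i j i h f
  set p := pOf j i h f with hp
  set p' := pp (prt p) (!bit p) with hp'
  have hm' : k = i.succAbove (f p') := rfl
  -- the new pivot position equals the old one
  have hposition : (emv i k * f) p = mOf j k hkj := by
    apply Fin.succAbove_right_injective (p := k)
    rw [succAbove_mOf j k hkj, Equiv.Perm.mul_apply]
    rw [succAbove_emv, f_pOf j i h f, succAbove_mOf j i h]
    exact Equiv.swap_apply_of_ne_of_ne (Ne.symm h) (Ne.symm hkj)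
  have hpOf : pOf j k hkj (emv i k * f) = p := by
    unfold pOf
    rw [← hposition]
    simp
  constructor
  · exact hpOf
  · unfold kOf
    rw [hpOf, ← hp', Equiv.Perm.mul_apply, succAbove_emv, ← hm']
    exact Equiv.swap_apply_right i k

lemma iotag_involutive (a : Fin (2*n+1) × Equiv.Perm (Fin (2*n))) :
    iotag j (iotag j a) = a := by
  obtain ⟨i, f⟩ := a
  by_cases h : i = j
  · have e1 : iotag j (i, f) = (i, f) := dif_pos h
    rw [e1, e1]
  · have hkj := kOf_ne_j j i h f
    have hki := kOf_ne_i j i h f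
    set k := kOf j i h f with hk
    have hdata := iotag_snd_data j i h f
    have e1 : iotag j (i, f) = (k, emv i k * f) := dif_neg h
    have e2 : iotag j (k, emv i k * f)
        = (kOf j k hkj (emv i k * f), emv k (kOf j k hkj (emv i k * f)) * (emv i k * f)) :=
      dif_neg hkj
    rw [e1, e2, hdata.2, emv_inv (Ne.symm hki), inv_mul_cancel_left]

end Invol

/-! ### Cancellation of terms under the involution -/

section Cancel
variable {R : Type*} [CommRing R]

/-- The summand of the expanded `φ ⬝ Y` entry. -/
noncomputable def tm (φ : Matrix (Fin (2*n+1)) (Fin (2*n+1)) R) (j i : Fin (2*n+1))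
    (f : Equiv.Perm (Fin (2*n))) : R :=
  (-1:R)^(i:ℕ) * (φ j i * wterm (φ.submatrix i.succAbove i.succAbove) f)

lemma hpow_cancel (i k : ℕ) : (-1:R)^k * (-1:R)^(i+k+1) = -(-1:R)^i := by
  rw [← pow_add]
  have h2 : k + (i+k+1) = 2*k + (i+1) := by ring
  rw [h2, pow_add, pow_mul, neg_one_sq, one_pow, one_mul, pow_succ]
  ring

lemma tm_cancel (φ : Matrix (Fin (2*n+1)) (Fin (2*n+1)) R)
    (halt : φ.transpose = -φ) (j i : Fin (2*n+1)) (h : ¬ i = j)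
    (f : Equiv.Perm (Fin (2*n))) :
    tm φ j i f + tm φ j (kOf j i h f) (emv i (kOf j i h f) * f) = 0 := by
  classical
  have hφ : ∀ x y, φ x y = - φ y x := alt_apply halt
  have hkj := kOf_ne_j j i h f
  have hki := kOf_ne_i j i h f
  set k := kOf j i h f with hk
  set p := pOf j i h f with hpdef
  set p' := pp (prt p) (!bit p) with hp'def
  have hm' : i.succAbove (f p') = k := rfl
  have hfp : i.succAbove (f p) = j := by rw [f_pOf j i h f, succAbove_mOf j i h]
  set t0 := prt p with ht0
  -- the two coordinate functions
  set a : Fin n → Fin (2*n+1) := fun t => i.succAbove (f (pp t false)) with ha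
  set b : Fin n → Fin (2*n+1) := fun t => i.succAbove (f (pp t true)) with hb
  have hane : ∀ t, t ≠ t0 → a t ≠ i ∧ a t ≠ k := by
    intro t ht
    refine ⟨Fin.succAbove_ne i _, ?_⟩
    rw [← hm']
    intro hEq
    have h1 := f.injective (Fin.succAbove_right_injective (p := i) hEq)
    rw [hp'def] at h1
    exact ht (pp_eq_iff.mp h1).1
  have hbne : ∀ t, t ≠ t0 → b t ≠ i ∧ b t ≠ k := by
    intro t ht
    refine ⟨Fin.succAbove_ne i _, ?_⟩
    rw [← hm']
    intro hEq
    have h1 := f.injective (Fin.succAbove_right_injective (p := i) hEq)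
    rw [hp'def] at h1
    exact ht (pp_eq_iff.mp h1).1
  -- expand the two wterms
  set sf : R := ((Equiv.Perm.sign f : ℤ) : R) with hsf
  set Q : R := ∏ t ∈ Finset.univ.erase t0, φ (a t) (b t) with hQ
  have hw1 : wterm (φ.submatrix i.succAbove i.succAbove) f = sf * (φ (a t0) (b t0) * Q) := by
    unfold wterm
    rw [← Finset.mul_prod_erase Finset.univ _ (Finset.mem_univ t0)]
    rfl
  have hsign2 : ((Equiv.Perm.sign (emv i k * f) : ℤ) : R) = (-1:R)^((i:ℕ)+(k:ℕ)+1) * sf := by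
    rw [map_mul, sign_emv (Ne.symm hki)]
    push_cast
    ring
  have hw2 : wterm (φ.submatrix k.succAbove k.succAbove) (emv i k * f)
      = ((-1:R)^((i:ℕ)+(k:ℕ)+1) * sf) *
        (φ (Equiv.swap i k (a t0)) (Equiv.swap i k (b t0)) * Q) := by
    unfold wterm
    rw [← hsign2]
    congr 1
    have hfac : ∀ t : Fin n,
        (φ.submatrix k.succAbove k.succAbove) ((emv i k * f) (pp t false)) ((emv i k * f) (pp t true))
          = φ (Equiv.swap i k (a t)) (Equiv.swap i k (b t)) := by
      intro t
      simp only [Matrix.submatrix_apply, Equiv.Perm.mul_apply, succAbove_emv, ha, hb]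
    rw [Finset.prod_congr rfl (fun t _ => hfac t),
      ← Finset.mul_prod_erase Finset.univ _ (Finset.mem_univ t0)]
    congr 1
    refine Finset.prod_congr rfl (fun t ht => ?_)
    have ht' := Finset.ne_of_mem_erase ht
    rw [Equiv.swap_apply_of_ne_of_ne (hane t ht').1 (hane t ht').2,
      Equiv.swap_apply_of_ne_of_ne (hbne t ht').1 (hbne t ht').2]
  have hpow := hpow_cancel (R := R) (i:ℕ) (k:ℕ)
  -- now case on the orientation of the pivot pair
  cases hbp : bit p
  · -- p is the left element of its pair
    have hpp : p = pp t0 false := by rw [← hbp, ht0, pp_prt_bit]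
    have hpp' : p' = pp t0 true := by rw [hp'def, hbp]; rfl
    have hat0 : a t0 = j := by rw [ha]; simp only []; rw [← hpp, hfp]
    have hbt0 : b t0 = k := by rw [hb]; simp only []; rw [← hpp', hm']
    have hsw1 : Equiv.swap i k (a t0) = j := by
      rw [hat0]; exact Equiv.swap_apply_of_ne_of_ne (Ne.symm h) (Ne.symm hkj)
    have hsw2 : Equiv.swap i k (b t0) = i := by rw [hbt0]; exact Equiv.swap_apply_right i k
    rw [tm, tm, hw1, hw2, hsw1, hsw2, hat0, hbt0]
    linear_combination (φ j i * φ j k * sf * Q) * hpow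
  · -- p is the right element of its pair
    have hpp : p = pp t0 true := by rw [← hbp, ht0, pp_prt_bit]
    have hpp' : p' = pp t0 false := by rw [hp'def, hbp]; rfl
    have hat0 : a t0 = k := by rw [ha]; simp only []; rw [← hpp', hm']
    have hbt0 : b t0 = j := by rw [hb]; simp only []; rw [← hpp, hfp]
    have hsw1 : Equiv.swap i k (a t0) = i := by rw [hat0]; exact Equiv.swap_apply_right i k
    have hsw2 : Equiv.swap i k (b t0) = j := by
      rw [hbt0]; exact Equiv.swap_apply_of_ne_of_ne (Ne.symm h) (Ne.symm hkj)
    rw [tm, tm, hw1, hw2, hsw1, hsw2, hat0, hbt0,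
      hφ k j, hφ i j]
    linear_combination (-(φ j i * φ j k * sf * Q)) * hpow

end Cancel

/-! ### Summing up: the key identity over any commutative ring, with a cardinality factor -/

section Sum
variable {R : Type*} [CommRing R]

lemma fullsum_zero (φ : Matrix (Fin (2*n+1)) (Fin (2*n+1)) R)
    (halt : φ.transpose = -φ) (hdiag : ∀ x, φ x x = 0) (j : Fin (2*n+1)) :
    ∑ a : Fin (2*n+1) × Equiv.Perm (Fin (2*n)), tm φ j a.1 a.2 = 0 := by
  classical
  apply Finset.sum_ninvolution (iotag j)
  · intro x
    by_cases h : x.1 = j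
    · have e1 : iotag j x = x := dif_pos h
      have e2 : tm φ j x.1 x.2 = 0 := by rw [tm, h, hdiag]; ring
      rw [e1, e2]; ring
    · obtain ⟨i, f⟩ := x
      have e1 : iotag j (i, f) = (kOf j i h f, emv i (kOf j i h f) * f) := dif_neg h
      rw [e1]
      exact tm_cancel φ halt j i h f
  · intro x hne
    by_cases h : x.1 = j
    · exact absurd (by rw [tm, h, hdiag]; ring) hne
    · obtain ⟨i, f⟩ := x
      have e1 : iotag j (i, f) = (kOf j i h f, emv i (kOf j i h f) * f) := dif_neg h
      rw [e1]
      intro hEq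
      exact (kOf_ne_i j i h f) (congrArg Prod.fst hEq)
  · exact fun x => Finset.mem_univ _
  · exact iotag_involutive j

lemma key_eq (φ : Matrix (Fin (2*n+1)) (Fin (2*n+1)) R)
    (halt : φ.transpose = -φ) (j : Fin (2*n+1)) :
    ∑ a : Fin (2*n+1) × Equiv.Perm (Fin (2*n)), tm φ j a.1 a.2 =
      (Fintype.card ((Fin n → Bool) × Equiv.Perm (Fin n))) •
        ∑ i, φ j i * ((-1:R)^(i:ℕ) * pfaffian (φ.submatrix i.succAbove i.succAbove)) := by
  rw [Fintype.sum_prod_type, Finset.smul_sum]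
  refine Finset.sum_congr rfl fun i _ => ?_
  have halt_i : (φ.submatrix i.succAbove i.succAbove).transpose
      = -(φ.submatrix i.succAbove i.succAbove) := by
    rw [Matrix.transpose_submatrix, halt]
    rfl
  have h1 : ∑ f : Equiv.Perm (Fin (2*n)), tm φ j i f
      = (-1:R)^(i:ℕ) * (φ j i *
          ∑ f : Equiv.Perm (Fin (2*n)), wterm (φ.submatrix i.succAbove i.succAbove) f) := by
    rw [Finset.mul_sum, Finset.mul_sum]
    exact Finset.sum_congr rfl fun f _ => rfl
  rw [h1, sum_wterm_eq halt_i, mul_smul_comm, mul_smul_comm]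
  congr 1
  ring

end Sum

/-! ### The generic alternating matrix over a polynomial ring -/

section Generic

/-- The generic ring. -/
abbrev GR (N : ℕ) : Type := MvPolynomial (Fin N × Fin N) ℤ

/-- The generic alternating matrix. -/
noncomputable def genM (N : ℕ) : Matrix (Fin N) (Fin N) (GR N) :=
  Matrix.of fun x y =>
    if x < y then MvPolynomial.X (x, y) else if y < x then - MvPolynomial.X (y, x) else 0

lemma genM_alt (N : ℕ) : (genM N).transpose = -(genM N) := by
  ext x y
  rcases lt_trichotomy x y with h | h | h
  · simp [genM, Matrix.transpose_apply, h, asymm h]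
  · subst h
    simp [genM]
  · simp [genM, Matrix.transpose_apply, h, asymm h]

lemma genM_diag (N : ℕ) : ∀ x, genM N x x = 0 := by
  intro x
  simp [genM]

lemma generic_entry_zero (j : Fin (2*n+1)) :
    ∑ i, genM (2*n+1) j i *
      ((-1 : GR (2*n+1))^(i:ℕ) *
        pfaffian ((genM (2*n+1)).submatrix i.succAbove i.succAbove)) = 0 := by
  have h1 := fullsum_zero (genM (2*n+1)) (genM_alt _) (genM_diag _) j
  have h2 := key_eq (genM (2*n+1)) (genM_alt _) j
  rw [h1] at h2
  set c := Fintype.card ((Fin n → Bool) × Equiv.Perm (Fin n)) with hc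
  set S := ∑ i, genM (2*n+1) j i *
      ((-1 : GR (2*n+1))^(i:ℕ) *
        pfaffian ((genM (2*n+1)).submatrix i.succAbove i.succAbove)) with hS
  have h3 : (c : GR (2*n+1)) * S = 0 := by
    rw [← nsmul_eq_mul, ← h2]
  have hcne : (c : GR (2*n+1)) ≠ 0 := by
    have : c ≠ 0 := Fintype.card_ne_zero
    exact_mod_cast Nat.cast_ne_zero.mpr this
  rcases mul_eq_zero.mp h3 with h | h
  · exact absurd h hcne
  · exact h

/-- A ring hom maps pfaffians to pfaffians. -/
lemma map_pfaffian {A B : Type*} [CommRing A] [CommRing B] (g : A →+* B)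
    (M : Matrix (Fin (2*n)) (Fin (2*n)) A) :
    g (pfaffian M) = pfaffian (M.map g) := by
  unfold pfaffian
  rw [map_sum]
  refine Finset.sum_congr rfl fun σ _ => ?_
  rw [map_zsmul, map_prod]
  congr 1

end Generic
end PfAux

variable {R : Type*} [CommRing R]

theorem alternating_mulVec_pfaffians_eq_zero'
    {R : Type*} [CommRing R] {n : ℕ} (φ : Matrix (Fin (2*n+1)) (Fin (2*n+1)) R)
    (halt : φ.transpose = -φ) (hdiag : ∀ i, φ i i = 0) :
    φ.mulVec (fun (i : Fin (2*n+1)) => (-1 : R) ^ (i : ℕ) * pfaffian (φ.submatrix i.succAbove i.succAbove)) = 0 := by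
  classical
  funext j
  show ∑ i, φ j i * ((-1 : R) ^ (i : ℕ) * pfaffian (φ.submatrix i.succAbove i.succAbove)) = 0
  set g : PfAux.GR (2*n+1) →+* R :=
    MvPolynomial.eval₂Hom (Int.castRingHom R) (fun pq => φ pq.1 pq.2) with hg
  have hmap : ∀ x y, g (PfAux.genM (2*n+1) x y) = φ x y := by
    intro x y
    rcases lt_trichotomy x y with h | h | h
    · simp [PfAux.genM, h, hg]
    · subst h
      simp [PfAux.genM, hg, hdiag]
    · have hxy : φ x y = - φ y x := PfAux.alt_apply halt x y
      simp [PfAux.genM, h, asymm h, hg, hxy]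
  have hsub : ∀ i : Fin (2*n+1),
      ((PfAux.genM (2*n+1)).submatrix i.succAbove i.succAbove).map g
        = φ.submatrix i.succAbove i.succAbove := by
    intro i
    ext x y
    simp [Matrix.map_apply, Matrix.submatrix_apply, hmap]
  have h0 := congrArg g (PfAux.generic_entry_zero (n := n) j)
  rw [map_sum, map_zero] at h0
  rw [← h0]
  refine (Finset.sum_congr rfl fun i _ => ?_).symm
  rw [map_mul, map_mul, map_pow, map_neg, map_one, PfAux.map_pfaffian, hsub, hmap]

open Finset in
/-- For a `(2n+1) x (2n+1)` alternating matrix `φ`, the vector of signed maximal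
principal Pfaffians `Y i = (-1)^i * Pf(φ(i))` (zero-based indexing, corresponding to
`(-1)^(i+1)` in one-based indexing), where `φ(i)` deletes row and column `i`,
satisfies `φ · Y = 0`. -/
theorem alternating_mulVec_pfaffians_eq_zero
    {R : Type*} [CommRing R] {n : ℕ} (φ : Matrix (Fin (2*n+1)) (Fin (2*n+1)) R)
    (halt : φ.transpose = -φ) (hdiag : ∀ i, φ i i = 0) :
    φ.mulVec (fun (i : Fin (2*n+1)) => (-1 : R) ^ (i : ℕ) * pfaffian (φ.submatrix i.succAbove i.succAbove)) = 0 :=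
  alternating_mulVec_pfaffians_eq_zero' φ halt hdiag
end

section
/- The Pfaffian of a 2n×2n alternating matrix φ satisfies the expansion along the first row: Pf(φ) = Σ_{j=2}^{2n} (-1)^j φ_{1,j} Pf(φ(1,j)), where φ(1,j) is obtained from φ by deleting rows and columns 1 and j. -/
variable {R : Type*} [CommRing R]

/-- The order-embedding of `Fin (2*n)` onto the complement of two distinct indices
`i ≠ j` in `Fin (2*(n+1))`; used to delete rows/columns `i` and `j`. -/
noncomputable def delTwo {n : ℕ} (i j : Fin (2*(n+1))) (h : i ≠ j) :
    Fin (2*n) ↪o Fin (2*(n+1)) :=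
  ({i, j}ᶜ : Finset (Fin (2*(n+1)))).orderEmbOfFin
    (by rw [Finset.card_compl, Finset.card_pair h, Fintype.card_fin]; omega)

namespace PfAux
open Finset Equiv Equiv.Perm

variable {n : ℕ}

lemma compl_card (j : Fin (2*n+1)) :
    (({(0 : Fin (2*(n+1))), j.succ}ᶜ : Finset (Fin (2*(n+1))))).card = 2*n := by
  rw [Finset.card_compl, Finset.card_pair (Fin.succ_ne_zero j).symm, Fintype.card_fin]; omega

lemma delTwo_apply (j : Fin (2*n+1)) (k : Fin (2*n)) :
    delTwo (0 : Fin (2*(n+1))) j.succ (Fin.succ_ne_zero j).symm k =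
      if (k:ℕ) < (j:ℕ) then ⟨(k:ℕ)+1, by omega⟩ else ⟨(k:ℕ)+2, by omega⟩ := by
  have hf : ∀ k : Fin (2*n),
      (if (k:ℕ) < (j:ℕ) then (⟨(k:ℕ)+1, by omega⟩ : Fin (2*(n+1))) else ⟨(k:ℕ)+2, by omega⟩)
        ∈ ({(0 : Fin (2*(n+1))), j.succ}ᶜ : Finset (Fin (2*(n+1)))) := by
    intro k
    simp only [Finset.mem_compl, Finset.mem_insert, Finset.mem_singleton, not_or]
    split <;> constructor <;> · simp only [Fin.ext_iff, Fin.val_succ, Fin.val_zero]; omega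
  have hmono : StrictMono (fun k : Fin (2*n) =>
      if (k:ℕ) < (j:ℕ) then (⟨(k:ℕ)+1, by omega⟩ : Fin (2*(n+1))) else ⟨(k:ℕ)+2, by omega⟩) := by
    intro a b hab
    have hab' : (a:ℕ) < (b:ℕ) := hab
    simp only
    split <;> split <;> simp only [Fin.lt_def] <;> omega
  have := Finset.orderEmbOfFin_unique (compl_card j) hf hmono
  exact (congrFun this k).symm

lemma delTwo_mem (j : Fin (2*n+1)) (k : Fin (2*n)) :
    delTwo (0 : Fin (2*(n+1))) j.succ (Fin.succ_ne_zero j).symm k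
      ∈ ({(0 : Fin (2*(n+1))), j.succ}ᶜ : Finset (Fin (2*(n+1)))) :=
  Finset.orderEmbOfFin_mem _ _ _


/-- The permutation `0↦0, 1↦j+1`, sliding `2..j+1` down by one. -/
noncomputable def fperm (n : ℕ) (j : Fin (2*n+1)) : Equiv.Perm (Fin (2*(n+1))) :=
  (Fin.cycleRange (j.succ : Fin (2*(n+1))))⁻¹ * Equiv.swap 0 1

lemma zero_ne_one' : (0 : Fin (2*(n+1))) ≠ 1 := Fin.zero_ne_one

lemma val_one'' : ((1 : Fin (2*(n+1))) : ℕ) = 1 := Fin.val_one (2*n)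

lemma fperm_zero (j : Fin (2*n+1)) : fperm n j 0 = 0 := by
  rw [fperm, Equiv.Perm.mul_apply, Equiv.swap_apply_left]
  rw [Equiv.Perm.inv_eq_iff_eq]
  have h : Fin.cycleRange j.succ (0 : Fin (2*(n+1))) = 0 + 1 :=
    Fin.cycleRange_of_lt (n := 2*(n+1)) (by simp)
  exact (h.trans (zero_add 1)).symm

lemma fperm_one (j : Fin (2*n+1)) : fperm n j 1 = j.succ := by
  rw [fperm, Equiv.Perm.mul_apply, Equiv.swap_apply_right]
  rw [Equiv.Perm.inv_eq_iff_eq]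
  exact (Fin.cycleRange_of_eq (n := 2*(n+1)) rfl).symm

lemma fperm_two (j : Fin (2*n+1)) (k : Fin (2*n)) :
    fperm n j ⟨(k:ℕ)+2, by omega⟩ = delTwo 0 j.succ (Fin.succ_ne_zero j).symm k := by
  rw [delTwo_apply, fperm, Equiv.Perm.mul_apply,
    Equiv.swap_apply_of_ne_of_ne (by simp only [ne_eq, Fin.ext_iff, Fin.val_zero]; omega)
      (by simp only [ne_eq, Fin.ext_iff, val_one'']; omega),
    Equiv.Perm.inv_eq_iff_eq]
  by_cases h : (k:ℕ) < (j:ℕ)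
  · rw [if_pos h]
    have hc : ((Fin.cycleRange j.succ (⟨(k:ℕ)+1, by omega⟩ : Fin (2*(n+1)))) : ℕ)
        = (k:ℕ)+1+1 :=
      Fin.coe_cycleRange_of_lt (n := 2*(n+1)) (by simp only [Fin.lt_def, Fin.val_succ]; omega)
    exact (Fin.ext hc).symm
  · rw [if_neg h]
    exact (Fin.cycleRange_of_gt (n := 2*(n+1))
      (by simp only [Fin.lt_def, Fin.val_succ]; omega)).symm

lemma sign_fperm (j : Fin (2*n+1)) :
    Equiv.Perm.sign (fperm n j) = (-1) ^ (j:ℕ) := by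
  rw [fperm, map_mul, Equiv.Perm.sign_inv, Fin.sign_cycleRange,
    Equiv.Perm.sign_swap zero_ne_one', Fin.val_succ, pow_succ, mul_assoc]
  simp

/-- `Fin 2 ⊕ Fin (2*n) ≃ Fin (2*(n+1))`. -/
noncomputable def shiftE (n : ℕ) : Fin 2 ⊕ Fin (2*n) ≃ Fin (2*(n+1)) :=
  finSumFinEquiv.trans (finCongr (by omega))

/-- Extend a permutation of `Fin (2*n)` to `Fin (2*(n+1))` fixing `0, 1`. -/
noncomputable def shiftPerm (n : ℕ) (τ : Equiv.Perm (Fin (2*n))) :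
    Equiv.Perm (Fin (2*(n+1))) :=
  (shiftE n).permCongr (Equiv.sumCongr (Equiv.refl (Fin 2)) τ)

lemma shiftE_inl (i : Fin 2) : shiftE n (Sum.inl i) = ⟨(i:ℕ), by omega⟩ := by
  simp [shiftE, Fin.ext_iff]

lemma shiftE_inr (k : Fin (2*n)) : shiftE n (Sum.inr k) = ⟨(k:ℕ)+2, by omega⟩ := by
  simp [shiftE, Fin.ext_iff]

lemma shiftPerm_inl (τ : Equiv.Perm (Fin (2*n))) (i : Fin 2) :
    shiftPerm n τ ⟨(i:ℕ), by omega⟩ = ⟨(i:ℕ), by omega⟩ := by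
  rw [← shiftE_inl, shiftPerm, Equiv.permCongr_apply, Equiv.symm_apply_apply]
  simp

lemma shiftPerm_inr (τ : Equiv.Perm (Fin (2*n))) (k : Fin (2*n)) :
    shiftPerm n τ ⟨(k:ℕ)+2, by omega⟩ = ⟨(τ k : ℕ)+2, by omega⟩ := by
  rw [← shiftE_inr, shiftPerm, Equiv.permCongr_apply, Equiv.symm_apply_apply]
  simp [shiftE_inr]

lemma sign_shiftPerm (τ : Equiv.Perm (Fin (2*n))) :
    Equiv.Perm.sign (shiftPerm n τ) = Equiv.Perm.sign τ := by
  rw [shiftPerm, Equiv.Perm.sign_permCongr, Equiv.Perm.sign_sumCongr]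
  simp

/-- The permutation of `Fin (2*(n+1))` built from `j` and a permutation of `Fin (2*n)`. -/
noncomputable def expPerm (n : ℕ) (j : Fin (2*n+1)) (τ : Equiv.Perm (Fin (2*n))) :
    Equiv.Perm (Fin (2*(n+1))) :=
  fperm n j * shiftPerm n τ

lemma expPerm_zero (j : Fin (2*n+1)) (τ : Equiv.Perm (Fin (2*n))) :
    expPerm n j τ 0 = 0 := by
  rw [expPerm, Equiv.Perm.mul_apply]
  have h0 : (0 : Fin (2*(n+1))) = ⟨((0 : Fin 2) : ℕ), by omega⟩ := rfl
  rw [h0, shiftPerm_inl, ← h0, fperm_zero]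

lemma expPerm_one (j : Fin (2*n+1)) (τ : Equiv.Perm (Fin (2*n))) :
    expPerm n j τ 1 = j.succ := by
  rw [expPerm, Equiv.Perm.mul_apply]
  have h1 : (1 : Fin (2*(n+1))) = ⟨((1 : Fin 2) : ℕ), by omega⟩ := by
    simp [Fin.ext_iff, Fin.val_one']
  rw [h1, shiftPerm_inl, ← h1, fperm_one]

lemma expPerm_two (j : Fin (2*n+1)) (τ : Equiv.Perm (Fin (2*n))) (k : Fin (2*n)) :
    expPerm n j τ ⟨(k:ℕ)+2, by omega⟩ = delTwo 0 j.succ (Fin.succ_ne_zero j).symm (τ k) := by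
  rw [expPerm, Equiv.Perm.mul_apply, shiftPerm_inr, fperm_two]

lemma sign_expPerm (j : Fin (2*n+1)) (τ : Equiv.Perm (Fin (2*n))) :
    Equiv.Perm.sign (expPerm n j τ) = (-1)^(j:ℕ) * Equiv.Perm.sign τ := by
  rw [expPerm, map_mul, sign_fperm, sign_shiftPerm]


lemma val_zero'' : ((0 : Fin (2*(n+1))) : ℕ) = 0 := Fin.val_zero (2*n+1)

lemma expPerm_even (j : Fin (2*n+1)) (τ : Equiv.Perm (Fin (2*n))) (m : ℕ) (hm : m < n) :
    expPerm n j τ ⟨2*(m+1), by omega⟩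
      = delTwo 0 j.succ (Fin.succ_ne_zero j).symm (τ ⟨2*m, by omega⟩) :=
  expPerm_two j τ ⟨2*m, by omega⟩

lemma expPerm_odd (j : Fin (2*n+1)) (τ : Equiv.Perm (Fin (2*n))) (m : ℕ) (hm : m < n) :
    expPerm n j τ ⟨2*(m+1)+1, by omega⟩
      = delTwo 0 j.succ (Fin.succ_ne_zero j).symm (τ ⟨2*m+1, by omega⟩) :=
  expPerm_two j τ ⟨2*m+1, by omega⟩

lemma expPerm_mem (j : Fin (2*n+1)) (τ : Equiv.Perm (Fin (2*n))) (hτ : τ ∈ pfPerms n) :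
    expPerm n j τ ∈ pfPerms (n+1) := by
  rw [pfPerms, Finset.mem_filter] at hτ ⊢
  obtain ⟨-, hτ1, hτ2⟩ := hτ
  refine ⟨Finset.mem_univ _, ?_, ?_⟩
  · rintro ⟨m, hm⟩
    match m, hm with
    | 0, hm =>
      have e0 : (⟨2*((⟨0, hm⟩ : Fin (n+1)):ℕ), by omega⟩ : Fin (2*(n+1))) = 0 :=
        Fin.ext (by simp [val_zero''])
      have e1 : (⟨2*((⟨0, hm⟩ : Fin (n+1)):ℕ)+1, by omega⟩ : Fin (2*(n+1))) = 1 :=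
        Fin.ext (by simp [val_one'']; exact (Nat.mod_eq_of_lt (by omega)).symm)
      rw [e0, e1, expPerm_zero, expPerm_one]
      exact Fin.succ_pos j
    | (m+1), hm =>
      show expPerm n j τ ⟨2*(m+1), by omega⟩ < expPerm n j τ ⟨2*(m+1)+1, by omega⟩
      rw [expPerm_even j τ m (by omega), expPerm_odd j τ m (by omega)]
      exact (delTwo 0 j.succ (Fin.succ_ne_zero j).symm).lt_iff_lt.mpr (hτ1 ⟨m, by omega⟩)
  · rintro ⟨a, ha⟩ ⟨b, hb⟩ hab
    have hab' : a < b := hab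
    match a, ha, b, hb with
    | 0, ha, (b+1), hb =>
      have e0 : (⟨2*((⟨0, ha⟩ : Fin (n+1)):ℕ), by omega⟩ : Fin (2*(n+1))) = 0 :=
        Fin.ext (by simp [val_zero''])
      rw [e0, expPerm_zero]
      show (0 : Fin (2*(n+1))) < expPerm n j τ ⟨2*(b+1), by omega⟩
      rw [expPerm_even j τ b (by omega)]
      have hne := delTwo_mem j (τ ⟨2*b, by omega⟩)
      simp only [Finset.mem_compl, Finset.mem_insert, Finset.mem_singleton, not_or] at hne
      exact Fin.pos_iff_ne_zero.mpr hne.1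
    | (a+1), ha, (b+1), hb =>
      show expPerm n j τ ⟨2*(a+1), by omega⟩ < expPerm n j τ ⟨2*(b+1), by omega⟩
      rw [expPerm_even j τ a (by omega), expPerm_even j τ b (by omega)]
      refine (delTwo 0 j.succ (Fin.succ_ne_zero j).symm).lt_iff_lt.mpr ?_
      exact hτ2 ⟨a, by omega⟩ ⟨b, by omega⟩ (by simp only [Fin.mk_lt_mk]; omega)
    | 0, ha, 0, hb => exact absurd hab' (by omega)
    | (a+1), ha, 0, hb => exact absurd hab' (by omega)

lemma exists_expPerm (σ : Equiv.Perm (Fin (2*(n+1)))) (hσ : σ ∈ pfPerms (n+1)) :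
    ∃ j : Fin (2*n+1), ∃ τ ∈ pfPerms n, expPerm n j τ = σ := by
  rw [pfPerms, Finset.mem_filter] at hσ
  obtain ⟨-, h1, h2⟩ := hσ
  have hle : ∀ q : ℕ, (_ : q < n+1) → σ 0 ≤ σ ⟨2*q, by omega⟩ := by
    intro q hq
    rcases Nat.eq_zero_or_pos q with rfl | hq0
    · exact le_of_eq (congrArg σ (Fin.ext (by simp [val_zero''])))
    · refine le_of_lt ?_
      have e0 : σ (0 : Fin (2*(n+1))) = σ ⟨2*((⟨0, by omega⟩ : Fin (n+1)) : ℕ), by omega⟩ :=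
        congrArg σ (Fin.ext (by simp [val_zero'']))
      exact e0.trans_lt (h2 ⟨0, by omega⟩ ⟨q, hq⟩ (by simp only [Fin.mk_lt_mk]; omega))
  have hσ0 : σ 0 = 0 := by
    have hle2 : ∀ x : Fin (2*(n+1)), σ 0 ≤ σ x := by
      rintro ⟨v, hv⟩
      rcases Nat.even_or_odd v with ⟨q, hq⟩ | ⟨q, hq⟩
      · have hq2 : q < n + 1 := by omega
        have hx : (⟨v, hv⟩ : Fin (2*(n+1))) = ⟨2*q, by omega⟩ := Fin.ext (by simp; omega)
        rw [hx]; exact hle q (by omega)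
      · have hq2 : 2*q+1 < 2*(n+1) := by omega
        have hx : (⟨v, hv⟩ : Fin (2*(n+1))) = ⟨2*q+1, hq2⟩ := Fin.ext (by simp; omega)
        rw [hx]
        exact le_trans (hle q (by omega)) (le_of_lt (h1 ⟨q, by omega⟩))
    have h0 := hle2 (σ.symm 0)
    rw [Equiv.apply_symm_apply] at h0
    exact le_antisymm h0 (Fin.zero_le _)
  have hσ1 : σ 1 ≠ 0 := by
    rw [← hσ0]
    exact fun h => zero_ne_one' (σ.injective h).symm
  set j : Fin (2*n+1) := (σ 1).pred hσ1 with hj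
  have hjs : j.succ = σ 1 := Fin.succ_pred _ _
  have hmem : ∀ k : Fin (2*n),
      σ ⟨(k:ℕ)+2, by omega⟩ ∈ ({(0 : Fin (2*(n+1))), j.succ}ᶜ : Finset (Fin (2*(n+1)))) := by
    intro k
    simp only [Finset.mem_compl, Finset.mem_insert, Finset.mem_singleton, not_or]
    constructor
    · rw [← hσ0]
      intro h
      have h' := σ.injective h
      simp only [Fin.ext_iff, val_zero''] at h'
      omega
    · rw [hjs]
      intro h
      have h' := σ.injective h
      simp only [Fin.ext_iff, val_one''] at h'
      omega
  set s : Finset (Fin (2*(n+1))) := ({(0 : Fin (2*(n+1))), j.succ}ᶜ : Finset (Fin (2*(n+1)))) with hs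
  let τ0 : Fin (2*n) → Fin (2*n) := fun k =>
    (s.orderIsoOfFin (compl_card j)).symm ⟨σ ⟨(k:ℕ)+2, by omega⟩, hmem k⟩
  have hτ0inj : Function.Injective τ0 := by
    intro a b hab
    have h' := congrArg (fun x => ((s.orderIsoOfFin (compl_card j)) x : Fin (2*(n+1)))) hab
    simp only [τ0, OrderIso.apply_symm_apply] at h'
    have h'' := σ.injective h'
    simp only [Fin.ext_iff] at h'' ⊢
    omega
  let τ : Equiv.Perm (Fin (2*n)) :=
    Equiv.ofBijective τ0 (Finite.injective_iff_bijective.mp hτ0inj)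
  have hdτ : ∀ k : Fin (2*n),
      delTwo 0 j.succ (Fin.succ_ne_zero j).symm (τ k) = σ ⟨(k:ℕ)+2, by omega⟩ := by
    intro k
    have hco : delTwo 0 j.succ (Fin.succ_ne_zero j).symm (τ k)
        = ((s.orderIsoOfFin (compl_card j)) (τ k) : Fin (2*(n+1))) :=
      (Finset.coe_orderIsoOfFin_apply _ _ _).symm
    rw [hco]
    show ((s.orderIsoOfFin (compl_card j)) (τ0 k) : Fin (2*(n+1))) = _
    simp only [τ0, OrderIso.apply_symm_apply]
  have hlt : ∀ a b : Fin (2*n),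
      (τ a < τ b ↔ σ ⟨(a:ℕ)+2, by omega⟩ < σ ⟨(b:ℕ)+2, by omega⟩) := by
    intro a b
    rw [← (delTwo 0 j.succ (Fin.succ_ne_zero j).symm).lt_iff_lt, hdτ a, hdτ b]
  have hτmem : τ ∈ pfPerms n := by
    rw [pfPerms, Finset.mem_filter]
    refine ⟨Finset.mem_univ _, ?_, ?_⟩
    · intro i
      rw [hlt]
      exact h1 ⟨(i:ℕ)+1, by omega⟩
    · intro a b hab
      rw [hlt]
      refine h2 ⟨(a:ℕ)+1, by omega⟩ ⟨(b:ℕ)+1, by omega⟩ ?_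
      simp only [Fin.mk_lt_mk]
      exact Nat.succ_lt_succ hab
  refine ⟨j, τ, hτmem, ?_⟩
  apply Equiv.ext
  rintro ⟨v, hv⟩
  match v, hv with
  | 0, hv =>
    rw [show (⟨0, hv⟩ : Fin (2*(n+1))) = 0 from Fin.ext val_zero''.symm, expPerm_zero, hσ0]
  | 1, hv =>
    rw [show (⟨1, hv⟩ : Fin (2*(n+1))) = 1 from Fin.ext val_one''.symm, expPerm_one, hjs]
  | (k+2), hv =>
    have hk : k < 2*n := by omega
    exact (expPerm_two j τ ⟨k, hk⟩).trans (hdτ ⟨k, hk⟩)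


lemma expPerm_term {R : Type*} [CommRing R] (φ : Matrix (Fin (2*(n+1))) (Fin (2*(n+1))) R)
    (j : Fin (2*n+1)) (τ : Equiv.Perm (Fin (2*n))) :
    ((Equiv.Perm.sign (expPerm n j τ) : ℤ) •
        ∏ i : Fin (n+1), φ (expPerm n j τ ⟨2*i, by omega⟩) (expPerm n j τ ⟨2*i+1, by omega⟩))
      = (-1:R)^(j:ℕ) * φ 0 j.succ *
        ((Equiv.Perm.sign τ : ℤ) • ∏ i : Fin n,
          (φ.submatrix (delTwo 0 j.succ (Fin.succ_ne_zero j).symm)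
            (delTwo 0 j.succ (Fin.succ_ne_zero j).symm)) (τ ⟨2*i, by omega⟩) (τ ⟨2*i+1, by omega⟩)) := by
  have hprod : (∏ i : Fin (n+1),
        φ (expPerm n j τ ⟨2*i, by omega⟩) (expPerm n j τ ⟨2*i+1, by omega⟩))
      = φ 0 j.succ * ∏ i : Fin n,
          (φ.submatrix (delTwo 0 j.succ (Fin.succ_ne_zero j).symm)
            (delTwo 0 j.succ (Fin.succ_ne_zero j).symm)) (τ ⟨2*i, by omega⟩) (τ ⟨2*i+1, by omega⟩) := by
    rw [Fin.prod_univ_succ]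
    congr 1
    · refine congrArg₂ φ ?_ ?_
      · exact (congrArg (expPerm n j τ) (Fin.ext (by simp [val_zero'']))).trans
          (expPerm_zero j τ)
      · exact (congrArg (expPerm n j τ) (Fin.ext (by simp [val_one'']; exact (Nat.mod_eq_of_lt (by omega)).symm))).trans
          (expPerm_one j τ)
    · refine Finset.prod_congr rfl fun i _ => ?_
      exact congrArg₂ φ (expPerm_even j τ (i:ℕ) i.isLt) (expPerm_odd j τ (i:ℕ) i.isLt)
  rw [hprod, sign_expPerm, zsmul_eq_mul, zsmul_eq_mul]
  push_cast [Units.val_mul, Units.val_pow_eq_pow_val, Units.val_neg, Units.val_one]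
  ring

end PfAux

/-- Expansion of the Pfaffian of a `2n x 2n` alternating matrix along the first row:
`Pf(φ) = Σ_{j=2}^{2n} (-1)^j φ_{1,j} Pf(φ(1,j))` (one-based indexing; here stated
zero-based, with `φ(0, j)` the submatrix deleting rows and columns `0` and `j`). -/
theorem pfaffian_expansion_first_row
    {R : Type*} [CommRing R] {n : ℕ} (φ : Matrix (Fin (2*(n+1))) (Fin (2*(n+1))) R)
    (halt : φ.transpose = -φ) (hdiag : ∀ i, φ i i = 0) :
    pfaffian φ = ∑ j : Fin (2*n+1),
      (-1 : R) ^ (j : ℕ) * φ 0 j.succ *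
        pfaffian (φ.submatrix (delTwo 0 j.succ (Fin.succ_ne_zero j).symm)
          (delTwo 0 j.succ (Fin.succ_ne_zero j).symm)) := by
  classical
  have hrw : ∀ j : Fin (2*n+1),
      (-1 : R)^(j:ℕ) * φ 0 j.succ *
          pfaffian (φ.submatrix (delTwo 0 j.succ (Fin.succ_ne_zero j).symm)
            (delTwo 0 j.succ (Fin.succ_ne_zero j).symm))
        = ∑ τ ∈ pfPerms n, (-1 : R)^(j:ℕ) * φ 0 j.succ *
            ((Equiv.Perm.sign τ : ℤ) • ∏ i : Fin n,
              (φ.submatrix (delTwo 0 j.succ (Fin.succ_ne_zero j).symm)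
                (delTwo 0 j.succ (Fin.succ_ne_zero j).symm))
                (τ ⟨2*i, by omega⟩) (τ ⟨2*i+1, by omega⟩)) := by
    intro j
    rw [pfaffian, Finset.mul_sum]
  rw [Finset.sum_congr rfl fun j _ => hrw j, Finset.sum_sigma', pfaffian]
  refine (Finset.sum_bij
    (fun (a : Σ _ : Fin (2*n+1), Equiv.Perm (Fin (2*n))) _ => PfAux.expPerm n a.1 a.2)
    ?_ ?_ ?_ ?_).symm
  · intro a ha
    exact PfAux.expPerm_mem a.1 a.2 (Finset.mem_sigma.mp ha).2
  · rintro ⟨j1, τ1⟩ h1 ⟨j2, τ2⟩ h2 heq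
    have hj : j1 = j2 := by
      have := congrArg (fun σ : Equiv.Perm (Fin (2*(n+1))) => σ 1) heq
      simp only [PfAux.expPerm_one] at this
      exact Fin.succ_injective _ this
    subst hj
    have hτ : τ1 = τ2 := by
      apply Equiv.ext
      intro k
      apply (delTwo 0 j1.succ (Fin.succ_ne_zero j1).symm).injective
      have := congrArg (fun σ : Equiv.Perm (Fin (2*(n+1))) =>
        σ ⟨(k:ℕ)+2, by omega⟩) heq
      simp only at this
      rw [PfAux.expPerm_two, PfAux.expPerm_two] at this
      exact this
    rw [hτ]
  · intro b hb
    obtain ⟨j, τ, hτ, hE⟩ := PfAux.exists_expPerm b hb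
    exact ⟨⟨j, τ⟩, Finset.mem_sigma.mpr ⟨Finset.mem_univ _, hτ⟩, hE⟩
  · intro a ha
    exact (PfAux.expPerm_term φ a.1 a.2).symm
end
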